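/- A topological space X is stably locally compact (locally compact, coherent and sober) if and only if X is a core-compact, weakly Hausdorff, weakly coherent, monotone convergence space. -/

import Mathlib

/-- The specialization preorder: `x ≤ y` iff every open neighborhood of `x` contains `y`. -/
def SpecLE {X : Type*} [TopologicalSpace X] (x y : X) : Prop :=
  ∀ U : Set X, IsOpen U → x ∈ U → y ∈ U

/-- `↑x`, the upward closure of the point `x` in the specialization preorder. -/
def UpSet {X : Type*} [TopologicalSpace X] (x : X) : Set X :=
  {z | SpecLE x z}

/-- `↑A`, the upward closure of the set `A` in the specialization preorder. -/
def UpClo {X : Type*} [TopologicalSpace X] (A : Set X) : Set X :=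
  {z | ∃ a ∈ A, SpecLE a z}

/-- `↓A`, the downward closure of the set `A` in the specialization preorder. -/
def DownClo {X : Type*} [TopologicalSpace X] (A : Set X) : Set X :=
  {z | ∃ a ∈ A, SpecLE z a}

/-- A space is weakly Hausdorff (Keimel-Lawson) iff every open neighborhood `W` of
`↑x ∩ ↑y` contains `U ∩ V` for some open neighborhoods `U` of `x` and `V` of `y`. -/
def WeaklyHausdorff (X : Type*) [TopologicalSpace X] : Prop :=
  ∀ x y : X, ∀ W : Set X, IsOpen W → UpSet x ∩ UpSet y ⊆ W →
    ∃ U V : Set X, IsOpen U ∧ x ∈ U ∧ IsOpen V ∧ y ∈ V ∧ U ∩ V ⊆ W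

/-- The set of limits of a filter: points all of whose open neighborhoods belong to it. -/
def limSet {X : Type*} [TopologicalSpace X] (F : Filter X) : Set X :=
  {x | ∀ U : Set X, IsOpen U → x ∈ U → U ∈ F}

/-- Locally strongly sober: limits of each ultrafilter form the empty set or the closure
of a unique point. -/
def LocallyStronglySober (X : Type*) [TopologicalSpace X] : Prop :=
  ∀ 𝒰 : Ultrafilter X, limSet (𝒰 : Filter X) = ∅ ∨ ∃! x : X, limSet (𝒰 : Filter X) = closure {x}

/-- Saturated subset: intersection of its open neighborhoods. -/
def IsSaturated {X : Type*} [TopologicalSpace X] (A : Set X) : Prop :=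
  A = ⋂₀ {U : Set X | IsOpen U ∧ A ⊆ U}

/-- Coherent space: intersections of compact saturated subsets are compact. -/
def Coherent (X : Type*) [TopologicalSpace X] : Prop :=
  ∀ Q₁ Q₂ : Set X, IsCompact Q₁ → IsSaturated Q₁ → IsCompact Q₂ → IsSaturated Q₂ →
    IsCompact (Q₁ ∩ Q₂)

/-- Weakly coherent space: `↑x ∩ ↑y` is compact for all points `x`, `y`. -/
def WeaklyCoherent (X : Type*) [TopologicalSpace X] : Prop :=
  ∀ x y : X, IsCompact (UpSet x ∩ UpSet y)

/-- Sober space: every irreducible closed subset is the closure of a unique point. -/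
def Sober (X : Type*) [TopologicalSpace X] : Prop :=
  ∀ C : Set X, IsClosed C → IsIrreducible C → ∃! x : X, C = closure {x}

/-- `z` is a supremum of `D` with respect to the specialization preorder. -/
def IsSupOf {X : Type*} [TopologicalSpace X] (D : Set X) (z : X) : Prop :=
  (∀ d ∈ D, SpecLE d z) ∧ ∀ y : X, (∀ d ∈ D, SpecLE d y) → SpecLE z y

/-- `D` is (nonempty and) directed with respect to the specialization preorder. -/
def DirectedSubset {X : Type*} [TopologicalSpace X] (D : Set X) : Prop :=
  D.Nonempty ∧ DirectedOn SpecLE D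

/-- Monotone convergence space: a T0 space where every directed subset has a supremum for the
specialization ordering, and every open set is Scott-open. -/
def MonotoneConvergenceSpace (X : Type*) [TopologicalSpace X] : Prop :=
  T0Space X ∧ (∀ D : Set X, DirectedSubset D → ∃ z : X, IsSupOf D z) ∧
    ∀ U : Set X, IsOpen U → ∀ D : Set X, ∀ z : X,
      DirectedSubset D → IsSupOf D z → z ∈ U → ∃ d ∈ D, d ∈ U

/-- A filter on a complete lattice: nonempty, upward closed, downward directed. -/
def IsLatFilter {L : Type*} [CompleteLattice L] (F : Set L) : Prop :=
  F.Nonempty ∧ (∀ u ∈ F, ∀ v : L, u ≤ v → v ∈ F) ∧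
    ∀ u ∈ F, ∀ v ∈ F, ∃ w ∈ F, w ≤ u ∧ w ≤ v

/-- A Scott-open filter on a complete lattice. -/
def ScottOpenFilter {L : Type*} [CompleteLattice L] (F : Set L) : Prop :=
  IsLatFilter F ∧
    ∀ D : Set L, D.Nonempty → DirectedOn (· ≤ ·) D → sSup D ∈ F → ∃ d ∈ D, d ∈ F

/-- The join of two filters on a complete lattice: `{u ⊓ v | u ∈ F, v ∈ G}`. -/
def FilterJoin {L : Type*} [CompleteLattice L] (F G : Set L) : Set L :=
  {w | ∃ u ∈ F, ∃ v ∈ G, w = u ⊓ v}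

/-- Locally temperate: the join of any two Scott-open filters is a Scott-open filter. -/
def LocallyTemperate (L : Type*) [CompleteLattice L] : Prop :=
  ∀ F G : Set L, ScottOpenFilter F → ScottOpenFilter G → ScottOpenFilter (FilterJoin F G)

/-- `u` is way below `v`: every directed set with supremum above `v` contains an element above `u`. -/
def WayBelowL {L : Type*} [CompleteLattice L] (u v : L) : Prop :=
  ∀ D : Set L, D.Nonempty → DirectedOn (· ≤ ·) D → v ≤ sSup D → ∃ d ∈ D, u ≤ d

/-- Continuous lattice: every element is the supremum of a directed family of elements
way below it. -/
def ContinuousLat (L : Type*) [CompleteLattice L] : Prop :=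
  ∀ v : L, ∃ D : Set L, D.Nonempty ∧ DirectedOn (· ≤ ·) D ∧ (∀ d ∈ D, WayBelowL d v) ∧ v = sSup D

/-- Stable frame: `u ≪ v` and `u ≪ w` imply `u ≪ v ⊓ w`. -/
def StableLat (L : Type*) [CompleteLattice L] : Prop :=
  ∀ u v w : L, WayBelowL u v → WayBelowL u w → WayBelowL u (v ⊓ w)

/-- Core-compact space: the frame of open subsets is a continuous lattice. -/
def CoreCompact (X : Type*) [TopologicalSpace X] : Prop :=
  ContinuousLat (TopologicalSpace.Opens X)

/-- A lens: a nonempty set of the form `Q ∩ C` with `Q` compact saturated and `C` closed. -/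
def IsLens {X : Type*} [TopologicalSpace X] (L : Set X) : Prop :=
  L.Nonempty ∧ ∃ Q C : Set X, IsCompact Q ∧ IsSaturated Q ∧ IsClosed C ∧ L = Q ∩ C

/-- A quasi-lens: a pair `(Q, C)`, `Q` compact saturated, `C` closed, `Q` meets `C`,
`Q ⊆ ↑(Q ∩ C)`, and `C ⊆ cl (U ∩ C)` for every open neighborhood `U` of `Q`. -/
def IsQuasiLens {X : Type*} [TopologicalSpace X] (Q C : Set X) : Prop :=
  IsCompact Q ∧ IsSaturated Q ∧ IsClosed C ∧ (Q ∩ C).Nonempty ∧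
    Q ⊆ UpClo (Q ∩ C) ∧ ∀ U : Set X, IsOpen U → Q ⊆ U → C ⊆ closure (U ∩ C)

section Basics
variable {X : Type*} [TopologicalSpace X]

lemma specLE_refl (x : X) : SpecLE x x := fun _ _ h => h

lemma specLE_trans {x y z : X} (h1 : SpecLE x y) (h2 : SpecLE y z) : SpecLE x z :=
  fun U hU hx => h2 U hU (h1 U hU hx)

lemma upSet_subset {x : X} {U : Set X} (hU : IsOpen U) (hx : x ∈ U) : UpSet x ⊆ U :=
  fun _ hz => hz U hU hx

lemma self_mem_upSet (x : X) : x ∈ UpSet x := specLE_refl x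

lemma mem_closure_singleton_iff {z x : X} : z ∈ closure ({x} : Set X) ↔ SpecLE z x := by
  rw [mem_closure_iff]
  constructor
  · intro h U hU hz
    obtain ⟨w, hw, hw'⟩ := h U hU hz
    rwa [Set.mem_singleton_iff.mp hw'] at hw
  · intro h o ho hz
    exact ⟨x, h o ho hz, rfl⟩

lemma isCompact_upSet (x : X) : IsCompact (UpSet x) := by
  apply isCompact_of_finite_subcover
  intro ι U hU hcov
  obtain ⟨i, hi⟩ := Set.mem_iUnion.mp (hcov (self_mem_upSet x))
  exact ⟨{i}, fun z hz => Set.mem_iUnion₂.mpr ⟨i, Finset.mem_singleton_self i,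
    upSet_subset (hU i) hi hz⟩⟩

lemma isSaturated_upSet (x : X) : IsSaturated (UpSet x) := by
  apply Set.Subset.antisymm
  · intro z hz U hU
    exact hU.2 hz
  · intro z hz U hU hx
    exact hz U ⟨hU, upSet_subset hU hx⟩

lemma IsSaturated.mem_of_specLE {Q : Set X} (hQ : IsSaturated Q) {a z : X}
    (ha : a ∈ Q) (h : SpecLE a z) : z ∈ Q := by
  rw [hQ]
  intro U hU
  exact h U hU.1 (hU.2 ha)

lemma IsSaturated.inter {Q₁ Q₂ : Set X} (h1 : IsSaturated Q₁) (h2 : IsSaturated Q₂) :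
    IsSaturated (Q₁ ∩ Q₂) := by
  apply Set.Subset.antisymm
  · exact fun z hz U hU => hU.2 hz
  · intro z hz
    constructor
    · rw [h1]
      intro U hU
      exact hz U ⟨hU.1, fun w hw => hU.2 hw.1⟩
    · rw [h2]
      intro U hU
      exact hz U ⟨hU.1, fun w hw => hU.2 hw.2⟩

/-- The saturation of a set. -/
def Satur (A : Set X) : Set X := ⋂₀ {U : Set X | IsOpen U ∧ A ⊆ U}

lemma subset_satur (A : Set X) : A ⊆ Satur A := fun z hz U hU => hU.2 hz

lemma satur_subset {A U : Set X} (hU : IsOpen U) (h : A ⊆ U) : Satur A ⊆ U :=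
  fun z hz => hz U ⟨hU, h⟩

lemma isSaturated_satur (A : Set X) : IsSaturated (Satur A) := by
  apply Set.Subset.antisymm
  · intro z hz U hU
    exact hU.2 hz
  · intro z hz U hU
    exact hz U ⟨hU.1, satur_subset hU.1 hU.2⟩

lemma IsCompact.satur {A : Set X} (hA : IsCompact A) : IsCompact (Satur A) := by
  apply isCompact_of_finite_subcover
  intro ι U hU hcov
  obtain ⟨t, ht⟩ := hA.elim_finite_subcover U hU ((subset_satur A).trans hcov)
  exact ⟨t, satur_subset (isOpen_biUnion fun i _ => hU i) ht⟩

end Basics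
section Lattice
variable {L : Type*} [CompleteLattice L]

lemma wayBelowL_le {u v : L} (h : WayBelowL u v) : u ≤ v := by
  obtain ⟨d, hd, hud⟩ := h {v} ⟨v, rfl⟩
    (by intro a ha b hb; exact ⟨v, rfl, by simp_all, by simp_all⟩) (by simp)
  simp_all

lemma wayBelowL_mono_left {u u' v : L} (h : WayBelowL u v) (hu : u' ≤ u) : WayBelowL u' v :=
  fun D hD hdir hle => by
    obtain ⟨d, hd, hud⟩ := h D hD hdir hle
    exact ⟨d, hd, hu.trans hud⟩

lemma wayBelowL_mono_right {u v v' : L} (h : WayBelowL u v) (hv : v ≤ v') : WayBelowL u v' :=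
  fun D hD hdir hle => h D hD hdir (hv.trans hle)

lemma le_trans_wayBelowL {u u' v : L} (hu : u ≤ u') (h : WayBelowL u' v) : WayBelowL u v :=
  wayBelowL_mono_left h hu

/-- Interpolation in a continuous lattice. -/
lemma wayBelowL_interpolate (hL : ContinuousLat L) {u v : L} (h : WayBelowL u v) :
    ∃ w : L, WayBelowL u w ∧ WayBelowL w v := by
  obtain ⟨D, hDne, hDdir, hDwb, hDsup⟩ := hL v
  -- D' : elements e with e ≪ d for some d ∈ D (using witness families for each d)
  classical
  choose E hEne hEdir hEwb hEsup using fun d : L => hL d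
  set D' : Set L := ⋃ d ∈ D, E d with hD'
  have hD'ne : D'.Nonempty := by
    obtain ⟨d, hd⟩ := hDne
    obtain ⟨e, he⟩ := hEne d
    exact ⟨e, Set.mem_biUnion hd he⟩
  have hD'dir : DirectedOn (· ≤ ·) D' := by
    rintro a ha b hb
    rw [hD'] at ha hb
    obtain ⟨d₁, hd₁, ha⟩ := Set.mem_iUnion₂.mp ha
    obtain ⟨d₂, hd₂, hb⟩ := Set.mem_iUnion₂.mp hb
    obtain ⟨d₃, hd₃, h₁, h₂⟩ := hDdir d₁ hd₁ d₂ hd₂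
    -- a ≪ d₁ ≤ d₃ = sSup (E d₃): get a ≤ fa ∈ E d₃
    have ha' : a ≤ d₁ := wayBelowL_le (hEwb d₁ a ha)
    have hb' : b ≤ d₂ := wayBelowL_le (hEwb d₂ b hb)
    have h3 : WayBelowL a d₃ := fun Dx hx hdx hlex =>
      (hEwb d₁ a ha) Dx hx hdx (h₁.trans hlex)
    have h4 : WayBelowL b d₃ := fun Dx hx hdx hlex =>
      (hEwb d₂ b hb) Dx hx hdx (h₂.trans hlex)
    obtain ⟨fa, hfa, hafa⟩ := h3 (E d₃) (hEne d₃) (hEdir d₃) (hEsup d₃).le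
    obtain ⟨fb, hfb, hbfb⟩ := h4 (E d₃) (hEne d₃) (hEdir d₃) (hEsup d₃).le
    obtain ⟨f, hf, hff₁, hff₂⟩ := hEdir d₃ fa hfa fb hfb
    exact ⟨f, Set.mem_biUnion hd₃ hf, hafa.trans hff₁, hbfb.trans hff₂⟩
  have hD'sup : v ≤ sSup D' := by
    rw [hDsup]
    apply sSup_le
    intro d hd
    rw [hEsup d]
    exact sSup_le_sSup (fun e he => Set.mem_biUnion hd he)
  obtain ⟨e, he, hue⟩ := h D' hD'ne hD'dir hD'sup
  obtain ⟨d, hd, he'⟩ := Set.mem_iUnion₂.mp (hD' ▸ he)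
  exact ⟨d, le_trans_wayBelowL hue (hEwb d e he'), hDwb d hd⟩

end Lattice
lemma directedOn_finset_le {α : Type*} [Preorder α] {D : Set α} (h : DirectedOn (· ≤ ·) D)
    (hne : D.Nonempty) (t : Finset α) (ht : ↑t ⊆ D) : ∃ d ∈ D, ∀ i ∈ t, i ≤ d := by
  classical
  induction t using Finset.induction with
  | empty => exact hne.imp fun d hd => ⟨hd, by simp⟩
  | @insert i s hi ih =>
    have hs : (↑s : Set α) ⊆ D := by
      intro j hj; exact ht (by simp [hj])
    obtain ⟨d, hd, hds⟩ := ih hs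
    obtain ⟨e, he, h1, h2⟩ := h d hd i (ht (by simp))
    refine ⟨e, he, fun j hj => ?_⟩
    rcases Finset.mem_insert.mp hj with rfl | hj
    · exact h2
    · exact (hds j hj).trans h1

section HM
open TopologicalSpace
variable {X : Type*} [TopologicalSpace X]

/-- A compact set covered by the sup of a directed family of opens is inside one of them. -/
lemma compact_subset_of_directed {D : Set (Opens X)} (hne : D.Nonempty)
    (hdir : DirectedOn (· ≤ ·) D) {K : Set X} (hK : IsCompact K)
    (hcov : K ⊆ ↑(sSup D)) : ∃ d ∈ D, K ⊆ ↑d := by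
  rw [Opens.coe_sSup] at hcov
  have hc : K ⊆ ⋃ d : D, (d : Set X) := by
    intro z hz
    obtain ⟨d, hd, hzd⟩ := Set.mem_iUnion₂.mp (hcov hz)
    exact Set.mem_iUnion.mpr ⟨⟨d, hd⟩, hzd⟩
  obtain ⟨t, ht⟩ := hK.elim_finite_subcover (fun d : D => (d : Set X))
    (fun d => (d : Opens X).2) hc
  classical
  obtain ⟨d, hd, hub⟩ := directedOn_finset_le hdir hne (t.image Subtype.val)
    (by intro j hj; obtain ⟨i, _, rfl⟩ := Finset.mem_image.mp hj; exact i.2)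
  refine ⟨d, hd, ht.trans ?_⟩
  intro z hz
  obtain ⟨i, hi, hzi⟩ := Set.mem_iUnion₂.mp hz
  exact hub i.1 (Finset.mem_image.mpr ⟨i, hi, rfl⟩) hzi

/-- Hofmann-Mislove: in a sober space, a Scott-open filter of opens contains every open
containing its intersection. -/
lemma hofmann_mislove (hsob : Sober X) {F : Set (Opens X)} (hF : ScottOpenFilter F)
    {U : Opens X} (hsub : (⋂ V ∈ F, (V : Set X)) ⊆ ↑U) : U ∈ F := by
  by_contra hUF
  obtain ⟨hFfil, hFscott⟩ := hF
  obtain ⟨hFne, hFup, hFmeet⟩ := hFfil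
  have zorn := zorn_le_nonempty₀ {V : Opens X | U ≤ V ∧ V ∉ F} ?_ U ⟨le_rfl, hUF⟩
  · obtain ⟨m, hUm, hm⟩ := zorn
    obtain ⟨⟨hUm', hmF⟩, hmax⟩ := hm
    set C : Set X := (↑m : Set X)ᶜ with hC
    have hCclosed : IsClosed C := (m.2).isClosed_compl
    have htop : (⊤ : Opens X) ∈ F := by
      obtain ⟨w, hw⟩ := hFne
      exact hFup w hw ⊤ le_top
    have hCne : C.Nonempty := by
      rcases Set.eq_empty_or_nonempty C with h | h
      · exact absurd ((Opens.ext (by simpa [hC, Set.compl_empty_iff] using h)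
          : m = ⊤) ▸ htop) hmF
      · exact h
    have key : ∀ (W : Set X) (hW : IsOpen W), (C ∩ W).Nonempty →
        ((⟨W, hW⟩ : Opens X) ⊔ m) ∈ F := by
      intro W hW hne'
      obtain ⟨w, hwC, hwW⟩ := hne'
      by_contra hWF
      have hlt : m < ((⟨W, hW⟩ : Opens X) ⊔ m) := by
        apply lt_of_le_of_ne le_sup_right
        intro heq
        exact hwC (heq ▸ (Or.inl hwW : w ∈ ((⟨W, hW⟩ : Opens X) ⊔ m)))
      exact absurd ((hmax ⟨hUm'.trans hlt.le, hWF⟩ hlt.le).trans_lt' hlt).false id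
    have hCirr : IsIrreducible C := by
      refine ⟨hCne, ?_⟩
      intro A B hA hB hCA hCB
      by_contra hempty
      rw [Set.not_nonempty_iff_eq_empty] at hempty
      have hABm : A ∩ B ⊆ ↑m := by
        intro z hz
        by_contra hzm
        exact absurd hempty (Set.nonempty_iff_ne_empty.mp ⟨z, hzm, hz⟩)
      obtain ⟨w, hwF, hw1, hw2⟩ := hFmeet _ (key A hA hCA) _ (key B hB hCB)
      apply hmF
      apply hFup w hwF
      intro z hz
      rcases hw1 hz with h1 | h1
      · rcases hw2 hz with h2 | h2
        · exact hABm ⟨h1, h2⟩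
        · exact h2
      · exact h1
    obtain ⟨x, hx, -⟩ := hsob C hCclosed hCirr
    have hxF : ∀ W ∈ F, x ∈ (W : Set X) := by
      intro W hWF
      by_contra hxW
      apply hmF
      apply hFup W hWF
      intro z hzW
      by_contra hzm
      exact hxW (mem_closure_singleton_iff.mp (show z ∈ closure {x} by rw [← hx]; exact hzm) W W.2 hzW)
    exact (hx ▸ subset_closure rfl : x ∈ C) (hUm' (hsub (Set.mem_iInter₂.mpr hxF)))
  · intro c hcS hchain y hy
    refine ⟨sSup c, ⟨(hcS hy).1.trans (le_sSup hy), ?_⟩, fun z hz => le_sSup hz⟩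
    intro hcF
    obtain ⟨d, hdc, hdF⟩ := hFscott c ⟨y, hy⟩ hchain.directedOn hcF
    exact (hcS hdc).2 hdF
end HM
section Forward
open TopologicalSpace
variable {X : Type*} [TopologicalSpace X]

lemma coreCompact_of_locallyCompact (h : LocallyCompactSpace X) : CoreCompact X := by
  intro v
  refine ⟨{U : Opens X | ∃ K : Set X, IsCompact K ∧ (U : Set X) ⊆ K ∧ K ⊆ (v : Set X)},
    ⟨⊥, ∅, isCompact_empty, by simp, by simp⟩, ?_, ?_, ?_⟩
  · rintro a ⟨K₁, hK₁, ha₁, ha₂⟩ b ⟨K₂, hK₂, hb₁, hb₂⟩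
    exact ⟨a ⊔ b, ⟨K₁ ∪ K₂, hK₁.union hK₂, by
      simp only [Opens.coe_sup]
      exact Set.union_subset_union ha₁ hb₁, Set.union_subset ha₂ hb₂⟩,
      le_sup_left, le_sup_right⟩
  · rintro d ⟨K, hK, hd₁, hd₂⟩ D hDne hDdir hle
    obtain ⟨e, he, hKe⟩ := compact_subset_of_directed hDne hDdir hK
      (hd₂.trans (by exact_mod_cast hle))
    exact ⟨e, he, fun z hz => hKe (hd₁ hz)⟩
  · apply le_antisymm
    · intro x hx
      obtain ⟨K, hK, hKv, hKc⟩ := local_compact_nhds (v.2.mem_nhds hx)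
      rw [← SetLike.mem_coe, Opens.coe_sSup]
      refine Set.mem_iUnion₂.mpr ⟨⟨interior K, isOpen_interior⟩,
        ⟨K, hKc, interior_subset, hKv⟩, mem_interior_iff_mem_nhds.mpr hK⟩
    · apply sSup_le
      rintro d ⟨K, hK, hd₁, hd₂⟩
      exact fun z hz => hd₂ (hd₁ hz)

lemma t0_of_sober (h : Sober X) : T0Space X := by
  rw [t0Space_iff_inseparable]
  intro x y hxy
  rw [inseparable_iff_closure_eq] at hxy
  obtain ⟨z, hz, huniq⟩ := h (closure {x}) isClosed_closure
    isIrreducible_singleton.closure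
  exact (huniq x rfl).trans (huniq y (by rw [hxy])).symm

lemma monotoneConvergence_of_sober (h : Sober X) : MonotoneConvergenceSpace X := by
  have hsup : ∀ D : Set X, DirectedSubset D → ∃ z : X, IsSupOf D z ∧ closure D = closure {z} := by
    intro D ⟨hDne, hDdir⟩
    have hirr : IsIrreducible (closure D) := by
      refine ⟨hDne.closure, ?_⟩
      apply IsPreirreducible.closure
      intro A B hA hB ⟨a, haD, haA⟩ ⟨b, hbD, hbB⟩
      obtain ⟨c, hcD, hac, hbc⟩ := hDdir a haD b hbD
      exact ⟨c, hcD, hac A hA haA, hbc B hB hbB⟩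
    obtain ⟨z, hz, -⟩ := h (closure D) isClosed_closure hirr
    refine ⟨z, ⟨?_, ?_⟩, hz⟩
    · intro d hd U hU hdU
      obtain ⟨w, hw, hw'⟩ := mem_closure_iff.mp (hz ▸ subset_closure hd) U hU hdU
      rwa [Set.mem_singleton_iff.mp hw'] at hw
    · intro y hy
      have : D ⊆ closure {y} := fun d hd => mem_closure_singleton_iff.mpr (hy d hd)
      have : closure D ⊆ closure {y} := closure_minimal this isClosed_closure
      exact mem_closure_singleton_iff.mp (this (hz ▸ subset_closure rfl))
  refine ⟨t0_of_sober h, fun D hD => (hsup D hD).imp fun z hz => hz.1, ?_⟩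
  intro U hU D z hD hz hzU
  obtain ⟨z₀, hz₀, hcl⟩ := hsup D hD
  have h1 : SpecLE z z₀ := hz.2 z₀ hz₀.1
  have hz₀U : z₀ ∈ U := h1 U hU hzU
  have : z₀ ∈ closure D := hcl ▸ subset_closure rfl
  obtain ⟨d, hd, hd'⟩ := mem_closure_iff.mp this U hU hz₀U
  exact ⟨d, hd', hd⟩

lemma weaklyCoherent_of_coherent (h : Coherent X) : WeaklyCoherent X :=
  fun x y => h _ _ (isCompact_upSet x) (isSaturated_upSet x)
    (isCompact_upSet y) (isSaturated_upSet y)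

end Forward
section ForwardWH
open TopologicalSpace
variable {X : Type*} [TopologicalSpace X]

lemma exists_compact_saturated_nhd (h : LocallyCompactSpace X) (x : X) {O : Set X}
    (hO : IsOpen O) (hxO : x ∈ O) :
    ∃ K : Set X, IsCompact K ∧ IsSaturated K ∧ x ∈ interior K ∧ K ⊆ O := by
  obtain ⟨s, hs, hsO, hsc⟩ := local_compact_nhds (hO.mem_nhds hxO)
  refine ⟨Satur s, hsc.satur, isSaturated_satur s, ?_, satur_subset hO hsO⟩
  exact interior_mono (subset_satur s) (mem_interior_iff_mem_nhds.mpr hs)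

lemma weaklyHausdorff_of_slc (hlc : LocallyCompactSpace X) (hcoh : Coherent X)
    (hsob : Sober X) : WeaklyHausdorff X := by
  intro x y W hW hsubW
  set P : X → Set X → Prop := fun p K => IsCompact K ∧ IsSaturated K ∧ p ∈ interior K with hP
  set F : Set (Opens X) :=
    {V | ∃ K L : Set X, P x K ∧ P y L ∧ K ∩ L ⊆ (V : Set X)} with hF
  have hPmem : ∀ p K, P p K → p ∈ K := fun p K hK => interior_subset hK.2.2
  have hPint : ∀ p K L, P p K → P p L → P p (K ∩ L) := by
    rintro p K L ⟨hK1, hK2, hK3⟩ ⟨hL1, hL2, hL3⟩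
    refine ⟨hcoh K L hK1 hK2 hL1 hL2, hK2.inter hL2, ?_⟩
    rw [interior_inter]
    exact ⟨hK3, hL3⟩
  have hKL_compact : ∀ K L, P x K → P y L → IsCompact (K ∩ L) := by
    rintro K L ⟨hK1, hK2, -⟩ ⟨hL1, hL2, -⟩
    exact hcoh K L hK1 hK2 hL1 hL2
  obtain ⟨K₀, hK₀c, hK₀s, hK₀i, -⟩ :=
    exists_compact_saturated_nhd hlc x isOpen_univ (Set.mem_univ x)
  obtain ⟨L₀, hL₀c, hL₀s, hL₀i, -⟩ :=
    exists_compact_saturated_nhd hlc y isOpen_univ (Set.mem_univ y)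
  have hFscott : ScottOpenFilter F := by
    refine ⟨⟨⟨⊤, K₀, L₀, ⟨hK₀c, hK₀s, hK₀i⟩, ⟨hL₀c, hL₀s, hL₀i⟩, by simp⟩, ?_, ?_⟩, ?_⟩
    · rintro u ⟨K, L, hK, hL, hKL⟩ v huv
      exact ⟨K, L, hK, hL, hKL.trans huv⟩
    · rintro u ⟨K₁, L₁, hK₁, hL₁, h₁⟩ v ⟨K₂, L₂, hK₂, hL₂, h₂⟩
      refine ⟨u ⊓ v, ⟨K₁ ∩ K₂, L₁ ∩ L₂, hPint x K₁ K₂ hK₁ hK₂, hPint y L₁ L₂ hL₁ hL₂, ?_⟩,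
        inf_le_left, inf_le_right⟩
      rintro z ⟨⟨hz1, hz2⟩, hz3, hz4⟩
      exact ⟨h₁ ⟨hz1, hz3⟩, h₂ ⟨hz2, hz4⟩⟩
    · rintro D hDne hDdir ⟨K, L, hK, hL, hKL⟩
      obtain ⟨d, hd, hsub⟩ := compact_subset_of_directed hDne hDdir
        (hKL_compact K L hK hL) hKL
      exact ⟨d, hd, K, L, hK, hL, hsub⟩
  have hinter : (⋂ V ∈ F, (V : Set X)) ⊆ W := by
    intro z hz
    rw [Set.mem_iInter₂] at hz
    apply hsubW
    constructor
    · intro O hO hxO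
      obtain ⟨K, hKc, hKs, hKi, hKO⟩ := exists_compact_saturated_nhd hlc x hO hxO
      exact hz ⟨O, hO⟩ ⟨K, L₀, ⟨hKc, hKs, hKi⟩, ⟨hL₀c, hL₀s, hL₀i⟩,
        fun w hw => hKO hw.1⟩
    · intro O hO hyO
      obtain ⟨L, hLc, hLs, hLi, hLO⟩ := exists_compact_saturated_nhd hlc y hO hyO
      exact hz ⟨O, hO⟩ ⟨K₀, L, ⟨hK₀c, hK₀s, hK₀i⟩, ⟨hLc, hLs, hLi⟩,
        fun w hw => hLO hw.2⟩
  obtain ⟨K, L, hK, hL, hKL⟩ := hofmann_mislove hsob hFscott (U := ⟨W, hW⟩) hinter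
  exact ⟨interior K, interior L, isOpen_interior, hK.2.2, isOpen_interior, hL.2.2,
    fun z hz => hKL ⟨interior_subset hz.1, interior_subset hz.2⟩⟩

end ForwardWH
section Backward
open TopologicalSpace
variable {X : Type*} [TopologicalSpace X]

lemma sober_of_wh_mc (hwh : WeaklyHausdorff X) (hmc : MonotoneConvergenceSpace X) :
    Sober X := by
  obtain ⟨ht0, hsup, hscott⟩ := hmc
  intro C hCcl hCirr
  have hdir : DirectedSubset C := by
    refine ⟨hCirr.1, ?_⟩
    intro a ha b hb
    by_contra hub
    push_neg at hub
    have hsubW : UpSet a ∩ UpSet b ⊆ Cᶜ := by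
      rintro z ⟨hza, hzb⟩
      intro hzC
      exact hub z hzC hza hzb
    obtain ⟨U, V, hU, haU, hV, hbV, hUV⟩ := hwh a b Cᶜ hCcl.isOpen_compl hsubW
    obtain ⟨c, hcC, hcU, hcV⟩ := hCirr.2 U V hU hV ⟨a, ha, haU⟩ ⟨b, hb, hbV⟩
    exact hUV ⟨hcU, hcV⟩ hcC
  obtain ⟨z, hz⟩ := hsup C hdir
  have hzC : z ∈ C := by
    by_contra hzc
    obtain ⟨d, hdC, hd⟩ := hscott Cᶜ hCcl.isOpen_compl C z hdir hz hzc
    exact hd hdC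
  have hCz : C = closure {z} := by
    apply Set.Subset.antisymm
    · exact fun d hd => mem_closure_singleton_iff.mpr (hz.1 d hd)
    · exact closure_minimal (Set.singleton_subset_iff.mpr hzC) hCcl
  refine ⟨z, hCz, ?_⟩
  intro w hw
  have : Inseparable w z := inseparable_iff_closure_eq.mpr (by rw [← hw, ← hCz])
  exact ht0.t0 this

lemma locallyCompact_of_coreCompact_sober (hcc : CoreCompact X) (hsob : Sober X) :
    LocallyCompactSpace X := by
  constructor
  intro x n hn
  obtain ⟨O, hOn, hOopen, hxO⟩ := mem_nhds_iff.mp hn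
  set v : Opens X := ⟨O, hOopen⟩ with hv
  obtain ⟨D, hDne, hDdir, hDwb, hDsup⟩ := hcc v
  have hxD : x ∈ (↑(sSup D) : Set X) := by rw [← hDsup]; exact hxO
  rw [Opens.coe_sSup] at hxD
  obtain ⟨U₀, hU₀D, hxU₀⟩ := Set.mem_iUnion₂.mp hxD
  have hU₀v : WayBelowL U₀ v := hDwb U₀ hU₀D
  -- build interpolating sequence
  have hstep : ∀ w : {w : Opens X // WayBelowL U₀ w},
      ∃ w' : {w : Opens X // WayBelowL U₀ w}, WayBelowL w'.1 w.1 := by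
    rintro ⟨w, hw⟩
    obtain ⟨w', hw'1, hw'2⟩ := wayBelowL_interpolate hcc hw
    exact ⟨⟨w', hw'1⟩, hw'2⟩
  classical
  choose step hstep' using hstep
  set Wseq : ℕ → {w : Opens X // WayBelowL U₀ w} := fun n => step^[n] ⟨v, hU₀v⟩ with hWseq
  have hWstep : ∀ n, WayBelowL (Wseq (n + 1)).1 (Wseq n).1 := by
    intro n
    have : Wseq (n+1) = step (Wseq n) := by
      rw [hWseq]
      simp [Function.iterate_succ_apply']
    rw [this]
    exact hstep' (Wseq n)
  have hWle : ∀ n, (Wseq (n+1)).1 ≤ (Wseq n).1 := fun n => wayBelowL_le (hWstep n)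
  have hWanti : ∀ m n, m ≤ n → (Wseq n).1 ≤ (Wseq m).1 := by
    intro m n hmn
    induction n with
    | zero => simp_all
    | succ k ih =>
      rcases Nat.lt_or_ge m (k+1) with h | h
      · exact (hWle k).trans (ih (Nat.lt_succ_iff.mp h))
      · have : m = k + 1 := le_antisymm hmn h
        simp [this]
  set F : Set (Opens X) := {O' | ∃ n, (Wseq n).1 ≤ O'} with hF
  have hFscott : ScottOpenFilter F := by
    refine ⟨⟨⟨v, 0, by simp [hWseq]⟩, ?_, ?_⟩, ?_⟩
    · rintro u ⟨n, hn'⟩ v' huv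
      exact ⟨n, hn'.trans huv⟩
    · rintro u ⟨n, hn'⟩ u' ⟨m, hm'⟩
      exact ⟨(Wseq (max n m)).1, ⟨max n m, le_rfl⟩,
        (hWanti n _ (le_max_left n m)).trans hn', (hWanti m _ (le_max_right n m)).trans hm'⟩
    · rintro D' hD'ne hD'dir ⟨n, hn'⟩
      obtain ⟨d, hd, hd'⟩ := hWstep n D' hD'ne hD'dir hn'
      exact ⟨d, hd, n + 1, hd'⟩
  set K : Set X := ⋂ O' ∈ F, (O' : Set X) with hK
  have hU₀K : (U₀ : Set X) ⊆ K := by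
    rw [hK]
    apply Set.subset_iInter₂
    rintro O' ⟨n, hn'⟩
    exact (wayBelowL_le (Wseq n).2).trans hn'
  have hKv : K ⊆ O := by
    rw [hK]
    exact Set.iInter₂_subset v ⟨0, by simp [hWseq]⟩
  have hKcpt : IsCompact K := by
    apply isCompact_of_finite_subcover
    intro ι S hSopen hScov
    classical
    set f : Finset ι → Opens X := fun t => ⟨⋃ i ∈ t, S i, isOpen_biUnion fun i _ => hSopen i⟩
      with hf
    have hfmono : ∀ t₁ t₂ : Finset ι, t₁ ⊆ t₂ → f t₁ ≤ f t₂ := by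
      intro t₁ t₂ h z hz
      obtain ⟨i, hi, hzi⟩ := Set.mem_iUnion₂.mp hz
      exact Set.mem_iUnion₂.mpr ⟨i, h hi, hzi⟩
    have hD'dir : DirectedOn (· ≤ ·) (Set.range f) := by
      rintro a ⟨t₁, rfl⟩ b ⟨t₂, rfl⟩
      exact ⟨f (t₁ ∪ t₂), ⟨t₁ ∪ t₂, rfl⟩, hfmono _ _ Finset.subset_union_left,
        hfmono _ _ Finset.subset_union_right⟩
    have hKsub : K ⊆ ↑(sSup (Set.range f)) := by
      intro z hz
      obtain ⟨i, hzi⟩ := Set.mem_iUnion.mp (hScov hz)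
      rw [Opens.coe_sSup]
      exact Set.mem_iUnion₂.mpr ⟨f {i}, ⟨{i}, rfl⟩, by simp [hf, hzi]⟩
    have hmem : sSup (Set.range f) ∈ F :=
      hofmann_mislove hsob hFscott hKsub
    obtain ⟨n, hn'⟩ := hmem
    obtain ⟨d, ⟨t, rfl⟩, hd'⟩ := hWstep n (Set.range f) ⟨f ∅, ∅, rfl⟩ hD'dir hn'
    refine ⟨t, ?_⟩
    have : K ⊆ (Wseq (n+1)).1 := by
      rw [hK]
      exact Set.iInter₂_subset _ ⟨n + 1, le_rfl⟩
    exact this.trans hd'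
  exact ⟨K, mem_nhds_iff.mpr ⟨U₀, hU₀K, U₀.2, hxU₀⟩, hKv.trans hOn, hKcpt⟩
end Backward
section BackwardCoherent
variable {X : Type*} [TopologicalSpace X]

lemma coherent_of_wh_wc (hwh : WeaklyHausdorff X) (hwc : WeaklyCoherent X) : Coherent X := by
  intro Q₁ Q₂ hQ₁c hQ₁s hQ₂c hQ₂s
  apply isCompact_of_finite_subcover
  intro ι S hSopen hcov
  classical
  -- Step 0: pointwise data from weak Hausdorffness and weak coherence
  have step0 : ∀ x y : X, ∃ (A B : Set X) (t : Finset ι), IsOpen A ∧ IsOpen B ∧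
      (x ∈ Q₁ → y ∈ Q₂ → x ∈ A ∧ y ∈ B ∧ A ∩ B ⊆ ⋃ i ∈ t, S i) := by
    intro x y
    by_cases hxy : x ∈ Q₁ ∧ y ∈ Q₂
    · obtain ⟨hx, hy⟩ := hxy
      have hsub : UpSet x ∩ UpSet y ⊆ ⋃ i, S i := by
        rintro z ⟨hzx, hzy⟩
        exact hcov ⟨hQ₁s.mem_of_specLE hx hzx, hQ₂s.mem_of_specLE hy hzy⟩
      obtain ⟨t, ht⟩ := (hwc x y).elim_finite_subcover S hSopen hsub
      obtain ⟨A, B, hA, hxA, hB, hyB, hAB⟩ := hwh x y (⋃ i ∈ t, S i)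
        (isOpen_biUnion fun i _ => hSopen i) ht
      exact ⟨A, B, t, hA, hB, fun _ _ => ⟨hxA, hyB, hAB⟩⟩
    · exact ⟨∅, ∅, ∅, isOpen_empty, isOpen_empty, fun hx hy => absurd ⟨hx, hy⟩ hxy⟩
  choose A B t hAopen hBopen hcond using step0
  -- Step 1: for each y ∈ Q₂, compactness of Q₁
  have step1 : ∀ y : X, ∃ (Ay By : Set X) (ty : Finset ι),
      y ∈ Q₂ → Q₁ ⊆ Ay ∧ IsOpen By ∧ y ∈ By ∧ Ay ∩ By ⊆ ⋃ i ∈ ty, S i := by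
    intro y
    by_cases hy : y ∈ Q₂
    · have hQ₁cov : Q₁ ⊆ ⋃ x ∈ Q₁, A x y := by
        intro z hz
        exact Set.mem_biUnion hz (hcond z y hz hy).1
      obtain ⟨s, hsQ₁, hsfin, hscov⟩ := hQ₁c.elim_finite_subcover_image
        (fun x _ => hAopen x y) hQ₁cov
      refine ⟨⋃ x ∈ s, A x y, ⋂ x ∈ s, B x y, hsfin.toFinset.biUnion (fun x => t x y),
        fun _ => ⟨hscov, ?_, ?_, ?_⟩⟩
      · exact hsfin.isOpen_biInter fun x _ => hBopen x y
      · exact Set.mem_iInter₂.mpr fun x hx => (hcond x y (hsQ₁ hx) hy).2.1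
      · rintro z ⟨hz1, hz2⟩
        obtain ⟨x, hx, hzx⟩ := Set.mem_iUnion₂.mp hz1
        have hzB : z ∈ B x y := Set.mem_iInter₂.mp hz2 x hx
        have := (hcond x y (hsQ₁ hx) hy).2.2 ⟨hzx, hzB⟩
        obtain ⟨i, hi, hzi⟩ := Set.mem_iUnion₂.mp this
        exact Set.mem_iUnion₂.mpr ⟨i, Finset.mem_biUnion.mpr
          ⟨x, hsfin.mem_toFinset.mpr hx, hi⟩, hzi⟩
    · exact ⟨∅, ∅, ∅, fun h => absurd h hy⟩
  choose Ay By ty hcond2 using step1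
  -- Step 2: compactness of Q₂
  have hQ₂cov : Q₂ ⊆ ⋃ y ∈ Q₂, By y := by
    intro y hy
    exact Set.mem_biUnion hy (hcond2 y hy).2.2.1
  obtain ⟨r, hrQ₂, hrfin, hrcov⟩ := hQ₂c.elim_finite_subcover_image
    (fun y hy => (hcond2 y hy).2.1) hQ₂cov
  refine ⟨hrfin.toFinset.biUnion ty, ?_⟩
  rintro z ⟨hz1, hz2⟩
  obtain ⟨y, hy, hzy⟩ := Set.mem_iUnion₂.mp (hrcov hz2)
  have hyQ₂ : y ∈ Q₂ := hrQ₂ hy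
  have hzA : z ∈ Ay y := (hcond2 y hyQ₂).1 hz1
  obtain ⟨i, hi, hzi⟩ := Set.mem_iUnion₂.mp ((hcond2 y hyQ₂).2.2.2 ⟨hzA, hzy⟩)
  exact Set.mem_iUnion₂.mpr ⟨i, Finset.mem_biUnion.mpr ⟨y, hrfin.mem_toFinset.mpr hy, hi⟩, hzi⟩

end BackwardCoherent
theorem stablyLocallyCompact_iff (X : Type*) [TopologicalSpace X] :
    (LocallyCompactSpace X ∧ Coherent X ∧ Sober X) ↔
      (CoreCompact X ∧ WeaklyHausdorff X ∧ WeaklyCoherent X ∧ MonotoneConvergenceSpace X) := by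
  constructor
  · rintro ⟨hlc, hcoh, hsob⟩
    exact ⟨coreCompact_of_locallyCompact hlc, weaklyHausdorff_of_slc hlc hcoh hsob,
      weaklyCoherent_of_coherent hcoh, monotoneConvergence_of_sober hsob⟩
  · rintro ⟨hcc, hwh, hwc, hmc⟩
    have hsob := sober_of_wh_mc hwh hmc
    exact ⟨locallyCompact_of_coreCompact_sober hcc hsob, coherent_of_wh_wc hwh hwc, hsob⟩
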